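/- Let G = ℤ² ⋊ ℤ where the generator t of ℤ acts on ℤ² = ⟨x⟩ × ⟨y⟩ by t·x·t⁻¹ = x⁻¹ and t·y·t⁻¹ = y (the flat 3-manifold group B₁). Let A be the subgroup generated by t and y. Then N_G(A) = A, but Comm_G(A) = G. -/

import Mathlib

/-- The automorphism `(m, n) ↦ (−m, n)` of `ℤ²` (written multiplicatively). -/
def negFirst : MulAut (Multiplicative (ℤ × ℤ)) :=
  AddEquiv.toMultiplicative ((AddEquiv.neg ℤ).prodCongr (AddEquiv.refl ℤ))

/-- The action of `ℤ = ⟨t⟩` on `ℤ²` with `t·x·t⁻¹ = x⁻¹`, `t·y·t⁻¹ = y`. -/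
def B1act : Multiplicative ℤ →* MulAut (Multiplicative (ℤ × ℤ)) :=
  zpowersHom _ negFirst

/-- The flat 3-manifold group `B₁ = ℤ² ⋊ ℤ`. -/
abbrev B1 := SemidirectProduct (Multiplicative (ℤ × ℤ)) (Multiplicative ℤ) B1act

open SemidirectProduct Multiplicative

open Pointwise

namespace B1Aux

lemma negFirst_apply (a : Multiplicative (ℤ × ℤ)) :
    toAdd (negFirst a) = (-(toAdd a).1, (toAdd a).2) := rfl

lemma fixed_zpow {M : Type*} [Monoid M] (f : MulAut M) (a : M) (h : f a = a) (k : ℤ) :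
    (f ^ k) a = a := by
  induction k using Int.induction_on with
  | zero => rfl
  | succ i ih => rw [zpow_add_one, MulAut.mul_apply, h, ih]
  | pred i ih =>
      have hinv : f⁻¹ a = a := by
        rw [MulAut.inv_def, MulEquiv.symm_apply_eq, h]
      rw [zpow_sub_one, MulAut.mul_apply, hinv, ih]

lemma B1act_ofAdd (k : ℤ) : B1act (ofAdd k) = negFirst ^ k := rfl

lemma B1act_fixed (k : Multiplicative ℤ) (a : Multiplicative (ℤ × ℤ))
    (h : (toAdd a).1 = 0) : B1act k a = a := by
  have hfix : negFirst a = a := by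
    apply Multiplicative.toAdd.injective
    rw [negFirst_apply, h, neg_zero, ← h]
  exact fixed_zpow negFirst a hfix (toAdd k)

lemma B1act_fst_zero_iff (k : Multiplicative ℤ) (a : Multiplicative (ℤ × ℤ)) :
    (toAdd (B1act k a)).1 = 0 ↔ (toAdd a).1 = 0 := by
  constructor
  · intro h
    have := B1act_fixed k⁻¹ _ h
    rw [← MulAut.mul_apply, ← map_mul, inv_mul_cancel, map_one, MulAut.one_apply] at this
    rw [← this] at h
    exact h
  · intro h
    rw [B1act_fixed k a h, h]

/-- the elements `t`, `y`, `x`. -/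
def tt : B1 := inr (ofAdd (1 : ℤ))
def yy : B1 := inl (ofAdd ((0, 1) : ℤ × ℤ))
def xx : B1 := inl (ofAdd ((1, 0) : ℤ × ℤ))

/-- The subgroup of elements whose left part has vanishing first coordinate. -/
def A' : Subgroup B1 where
  carrier := {g | (toAdd g.left).1 = 0}
  one_mem' := rfl
  mul_mem' := by
    intro a b ha hb
    show (toAdd (a * b).left).1 = 0
    rw [mul_left, toAdd_mul, Prod.fst_add, ha, B1act_fixed _ _ hb, hb, add_zero]
  inv_mem' := by
    intro a ha
    show (toAdd a⁻¹.left).1 = 0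
    rw [inv_left]
    rw [B1act_fst_zero_iff, toAdd_inv, Prod.fst_neg, ha, neg_zero]

lemma mem_A' {g : B1} : g ∈ A' ↔ (toAdd g.left).1 = 0 := Iff.rfl

lemma tt_zpow (k : ℤ) : tt ^ k = inr (ofAdd k) := by
  rw [tt, ← map_zpow]
  congr 1
  apply Multiplicative.toAdd.injective
  rw [toAdd_zpow]
  simp

lemma yy_zpow (n : ℤ) : yy ^ n = inl (ofAdd ((0, n) : ℤ × ℤ)) := by
  rw [yy, ← map_zpow]
  congr 1
  apply Multiplicative.toAdd.injective
  rw [toAdd_zpow]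
  simp

lemma xx_zpow (m : ℤ) : xx ^ m = inl (ofAdd ((m, 0) : ℤ × ℤ)) := by
  rw [xx, ← map_zpow]
  congr 1
  apply Multiplicative.toAdd.injective
  rw [toAdd_zpow]
  simp

def Agrp : Subgroup B1 := Subgroup.closure {tt, yy}

lemma Agrp_eq : Agrp = A' := by
  apply le_antisymm
  · rw [Agrp, Subgroup.closure_le]
    rintro g (rfl | rfl) <;> rfl
  · intro g hg
    have h1 : g.left = ofAdd ((0, (toAdd g.left).2) : ℤ × ℤ) := by
      apply Multiplicative.toAdd.injective
      exact Prod.ext (mem_A'.1 hg) rfl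
    have h2 : g = inl g.left * inr g.right := (inl_left_mul_inr_right g).symm
    have h3 : inr g.right = tt ^ (toAdd g.right) := by rw [tt_zpow, ofAdd_toAdd]
    rw [h2, h1, ← yy_zpow, h3]
    have hyy : yy ∈ Agrp := Subgroup.subset_closure (by simp)
    have htt : tt ∈ Agrp := Subgroup.subset_closure (by simp)
    exact mul_mem (zpow_mem hyy _) (zpow_mem htt _)

lemma mem_Agrp {g : B1} : g ∈ Agrp ↔ (toAdd g.left).1 = 0 := by rw [Agrp_eq]; rfl


lemma conj_tt_left (g : B1) :
    (toAdd (g * tt * g⁻¹).left).1 = 2 * (toAdd g.left).1 := by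
  have h1 : (g * tt * g⁻¹).left =
      g.left * B1act (g.right * ofAdd 1 * g.right⁻¹) g.left⁻¹ := by
    rw [mul_left, mul_left, inv_left, mul_right, tt, left_inr, right_inr, map_one, mul_one,
      ← MulAut.mul_apply, ← map_mul]
  have h2 : g.right * ofAdd 1 * g.right⁻¹ = ofAdd (1 : ℤ) := mul_inv_cancel_comm _ _
  rw [h1, h2, B1act_ofAdd, zpow_one, toAdd_mul, Prod.fst_add, negFirst_apply]
  simp
  ring

lemma normalizer_Agrp : Subgroup.normalizer (Agrp : Set B1) = Agrp := by
  apply le_antisymm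
  · intro g hg
    have htt : tt ∈ Agrp := Subgroup.subset_closure (by simp [Agrp])
    have h1 : g * tt * g⁻¹ ∈ Agrp := (Subgroup.mem_normalizer_iff.mp hg tt).1 htt
    rw [mem_Agrp, conj_tt_left] at h1
    rw [mem_Agrp]
    omega
  · exact Subgroup.le_normalizer

/-- Parity of the `ℤ`-component, as a homomorphism to `ZMod 2`. -/
def pr : B1 →* Multiplicative (ZMod 2) :=
  (AddMonoidHom.toMultiplicative (Int.castAddHom (ZMod 2))).comp rightHom

lemma pr_eq_one {g : B1} : pr g = 1 ↔ (2 : ℤ) ∣ toAdd g.right := by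
  have h2 : ((toAdd g.right : ℤ) : ZMod 2) = 0 ↔ (2 : ℤ) ∣ toAdd g.right := by
    have := ZMod.intCast_zmod_eq_zero_iff_dvd (toAdd g.right) 2
    simpa using this
  rw [← h2]
  constructor
  · intro h
    exact congrArg Multiplicative.toAdd h
  · intro h
    exact Multiplicative.toAdd.injective h

lemma B1act_two_mul (j : ℤ) : B1act (ofAdd (2 * j)) = 1 := by
  rw [B1act_ofAdd, zpow_mul]
  have h2 : negFirst ^ (2 : ℤ) = 1 := by
    rw [zpow_two]
    ext a : 1
    apply Multiplicative.toAdd.injective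
    show toAdd (negFirst (negFirst a)) = toAdd a
    rw [negFirst_apply, negFirst_apply]
    simp
  rw [h2, one_zpow]

lemma xx_comm {g : B1} (h : pr g = 1) : xx * g = g * xx := by
  obtain ⟨j, hj⟩ := pr_eq_one.1 h
  ext : 1
  · rw [mul_left, mul_left]
    show xx.left * B1act (1 : Multiplicative ℤ) g.left = g.left * B1act g.right xx.left
    have hr : g.right = ofAdd (2 * j) := by
      apply Multiplicative.toAdd.injective
      exact hj
    rw [map_one, MulAut.one_apply, hr, B1act_two_mul, MulAut.one_apply, mul_comm]
  · rw [mul_right, mul_right]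
    show (1 : Multiplicative ℤ) * g.right = g.right * 1
    rw [one_mul, mul_one]

lemma relindex_ne_zero (H K : Subgroup B1) (h : ∀ g ∈ K, pr g = 1 → g ∈ H) :
    H.relIndex K ≠ 0 := by
  have hle : pr.ker ⊓ K ≤ H := fun g hg => h g hg.2 hg.1
  have hdvd : H.relIndex K ∣ (pr.ker ⊓ K).relIndex K :=
    Subgroup.relIndex_dvd_of_le_left K hle
  have heq : (pr.ker ⊓ K).relIndex K = pr.ker.relIndex K := Subgroup.inf_relIndex_right _ _
  have hker : pr.ker.relIndex K = Nat.card (K.map pr) := by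
    rw [Subgroup.relIndex, ← MonoidHom.ker_restrict, Subgroup.index_ker, MonoidHom.restrict_range]
  haveI : Finite (Multiplicative (ZMod 2)) := inferInstance
  have hpos : Nat.card (K.map pr) ≠ 0 := Nat.card_pos.ne'
  intro h0
  rw [heq, hker] at hdvd
  exact hpos (Nat.eq_zero_of_zero_dvd (h0 ▸ hdvd))

lemma mem_comm_aux (c : B1) (hc : ∀ g : B1, pr g = 1 → (c⁻¹ * g * c ∈ Agrp ↔ g ∈ Agrp)) :
    c ∈ Subgroup.Commensurable.commensurator Agrp := by
  rw [Subgroup.Commensurable.commensurator_mem_iff]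
  have hmem : ∀ g : B1, g ∈ ConjAct.toConjAct c • Agrp ↔ c⁻¹ * g * c ∈ Agrp := by
    intro g
    rw [Subgroup.mem_pointwise_smul_iff_inv_smul_mem]
    have : (ConjAct.toConjAct c)⁻¹ • g = c⁻¹ * g * c := by
      rw [← map_inv, ConjAct.toConjAct_smul, inv_inv]
    rw [this]
  have hpr : ∀ g : B1, pr g = 1 → pr (c⁻¹ * g * c) = 1 := by
    intro g hg
    rw [map_mul, map_mul, hg, mul_one, map_inv, mul_comm, mul_inv_cancel]
  constructor
  · apply relindex_ne_zero
    intro g hg h1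
    exact (hmem g).2 ((hc g h1).2 hg)
  · apply relindex_ne_zero
    intro g hg h1
    exact (hc g h1).1 ((hmem g).1 hg)

lemma xx_mem_comm : xx ∈ Subgroup.Commensurable.commensurator Agrp := by
  apply mem_comm_aux
  intro g hg
  have h1 : xx⁻¹ * g * xx = g := by
    rw [mul_assoc, ← xx_comm hg, ← mul_assoc, inv_mul_cancel, one_mul]
  rw [h1]

lemma tt_mem_comm : tt ∈ Subgroup.Commensurable.commensurator Agrp := by
  apply mem_comm_aux
  intro g _
  have h1 : (tt⁻¹ * g * tt).left = B1act (ofAdd (1 : ℤ))⁻¹ g.left := by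
    simp only [mul_left, inv_left, inv_right, tt, left_inr, right_inr, inv_one, map_one,
      mul_one, one_mul]
  rw [mem_Agrp, mem_Agrp, h1, B1act_fst_zero_iff]

lemma yy_central (g : B1) : yy * g = g * yy := by
  ext : 1
  · rw [mul_left, mul_left]
    show yy.left * B1act (1 : Multiplicative ℤ) g.left = g.left * B1act g.right yy.left
    rw [map_one, MulAut.one_apply, yy, left_inl]
    rw [B1act_fixed g.right _ (by norm_num), mul_comm]
  · rw [mul_right, mul_right]
    show (1 : Multiplicative ℤ) * g.right = g.right * 1
    rw [one_mul, mul_one]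

lemma yy_mem_comm : yy ∈ Subgroup.Commensurable.commensurator Agrp := by
  apply mem_comm_aux
  intro g _
  have h1 : yy⁻¹ * g * yy = g := by
    rw [mul_assoc, ← yy_central g, ← mul_assoc, inv_mul_cancel, one_mul]
  rw [h1]

lemma comm_top : Subgroup.Commensurable.commensurator Agrp = ⊤ := by
  rw [eq_top_iff]
  intro g _
  have h2 : g = inl g.left * inr g.right := (inl_left_mul_inr_right g).symm
  have h3 : inr g.right = tt ^ (toAdd g.right) := by rw [tt_zpow, ofAdd_toAdd]
  have h4 : inl g.left = xx ^ (toAdd g.left).1 * yy ^ (toAdd g.left).2 := by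
    rw [xx_zpow, yy_zpow, ← map_mul]
    congr 1
    apply Multiplicative.toAdd.injective
    rw [toAdd_mul, toAdd_ofAdd, toAdd_ofAdd, Prod.mk_add_mk, add_zero, zero_add]
  rw [h2, h3, h4]
  exact mul_mem (mul_mem (zpow_mem xx_mem_comm _) (zpow_mem yy_mem_comm _))
    (zpow_mem tt_mem_comm _)

end B1Aux


/-- In `B₁`, the subgroup `A = ⟨t, y⟩` is its own normalizer, but its commensurator
is the whole group. -/
theorem B1_normalizer_eq_self_commensurator_top :
    letI t : B1 := SemidirectProduct.inr (Multiplicative.ofAdd (1 : ℤ))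
    letI y : B1 := SemidirectProduct.inl (Multiplicative.ofAdd ((0, 1) : ℤ × ℤ))
    letI A : Subgroup B1 := Subgroup.closure {t, y}
    Subgroup.normalizer (A : Set B1) = A ∧ Subgroup.Commensurable.commensurator A = ⊤ :=
  ⟨B1Aux.normalizer_Agrp, B1Aux.comm_top⟩
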